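/- arXiv:2603.20722 — 8 statements merged into one kernel-verified Lean document; each statement's English description precedes it below -/
import Mathlib

section
/- Let n ≥ 3 and k ∈ ℤ_n nonzero, with n ≡ 0 (mod 3) and k ≢ 0 (mod 3). Then for each j ∈ {0,1,2}, the set C_j = {u_{3i+j}, v_{3i+j} : i ∈ ℤ_n} is a total perfect code in GP(n,k), i.e., every vertex of GP(n,k) is adjacent to exactly one vertex of C_j. -/
/-- The generalized Petersen graph GP(n,k): vertices are `Sum.inl i` (outer, u_i)
and `Sum.inr i` (inner, v_i) for `i : ZMod n`. -/
def GP (n k : ℕ) : SimpleGraph (ZMod n ⊕ ZMod n) where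
  Adj x y :=
    match x, y with
    | .inl i, .inl j => i ≠ j ∧ (j = i + 1 ∨ i = j + 1)
    | .inl i, .inr j => i = j
    | .inr i, .inl j => i = j
    | .inr i, .inr j => i ≠ j ∧ (j = i + (k : ZMod n) ∨ i = j + (k : ZMod n))
  symm := by constructor; rintro (i|i) (j|j) h <;> simp_all <;> tauto
  loopless := by constructor; rintro (i|i) h <;> simp_all

/-- A perfect code: an independent set such that every vertex not in `C`
has exactly one neighbor in `C`. -/
def IsPerfectCode {V : Type*} (G : SimpleGraph V) (C : Set V) : Prop :=
  (∀ x ∈ C, ∀ y ∈ C, ¬ G.Adj x y) ∧ ∀ x ∉ C, ∃! y, y ∈ C ∧ G.Adj x y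

/-- A total perfect code: every vertex has exactly one neighbor in `C`. -/
def IsTotalPerfectCode {V : Type*} (G : SimpleGraph V) (C : Set V) : Prop :=
  ∀ x, ∃! y, y ∈ C ∧ G.Adj x y

lemma GP_adj_ll {n k : ℕ} {a b : ZMod n} :
    (GP n k).Adj (.inl a) (.inl b) ↔ a ≠ b ∧ (b = a + 1 ∨ a = b + 1) := Iff.rfl
lemma GP_adj_lr {n k : ℕ} {a b : ZMod n} :
    (GP n k).Adj (.inl a) (.inr b) ↔ a = b := Iff.rfl
lemma GP_adj_rl {n k : ℕ} {a b : ZMod n} :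
    (GP n k).Adj (.inr a) (.inl b) ↔ a = b := Iff.rfl
lemma GP_adj_rr {n k : ℕ} {a b : ZMod n} :
    (GP n k).Adj (.inr a) (.inr b) ↔ a ≠ b ∧ (b = a + (k : ZMod n) ∨ a = b + (k : ZMod n)) :=
  Iff.rfl

private lemma zA (p q s c : ZMod 3) (hc : c ≠ 0) (h1 : p = s) (h2 : q = s)
    (h3 : q = p + c ∨ p = q + c) : False := by revert p q s c; decide
private lemma zB (p s c : ZMod 3) (hc : c ≠ 0) (h1 : p + c = s) (h2 : p = s) : False := by
  revert p s c; decide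
private lemma zC (p q s c : ZMod 3) (hc : c ≠ 0) (h1 : p + c = s) (h2 : q = s)
    (h3 : p = q + c) : False := by revert p q s c; decide
private lemma zD (p s c : ZMod 3) (hc : c ≠ 0) (h1 : p ≠ s) (h2 : p + c ≠ s) : p - c = s := by
  revert p s c; decide
private lemma zE (p q s c : ZMod 3) (hc : c ≠ 0) (h1 : p - c = s) (h2 : q = s)
    (h3 : q = p + c) : False := by revert p q s c; decide

/-- Lemma 2.2: for n ≡ 0 (mod 3) and k ≢ 0 (mod 3), C_j = {u_{3i+j}, v_{3i+j} : i ∈ ℤ_n}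
is a total perfect code in GP(n,k), for each j ∈ {0,1,2}. -/
theorem stmt_1 (n k : ℕ) (hn : 3 ≤ n) (hk0 : (k : ZMod n) ≠ 0)
    (h3 : n % 3 = 0) (hk3 : k % 3 ≠ 0) (j : ℕ) (hj : j < 3) :
    IsTotalPerfectCode (GP n k)
      {x | ∃ i : ZMod n, x = .inl (3 * i + (j : ZMod n)) ∨
        x = .inr (3 * i + (j : ZMod n))} := by
  haveI : NeZero n := ⟨by omega⟩
  haveI : Fact (1 < n) := ⟨by omega⟩
  have hdvd : (3 : ℕ) ∣ n := Nat.dvd_of_mod_eq_zero h3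
  set f := ZMod.castHom hdvd (ZMod 3) with hfdef
  set j3 := ((j : ℕ) : ZMod 3) with hj3
  have h30 : f (3 : ZMod n) = 0 := by
    have h' : ((3 : ℕ) : ZMod n) = (3 : ZMod n) := by push_cast; ring
    rw [← h', map_natCast]; decide
  have hmem : ∀ a : ZMod n, (∃ i : ZMod n, a = 3 * i + (j : ZMod n)) ↔ f a = j3 := by
    intro a
    constructor
    · rintro ⟨i, rfl⟩
      rw [map_add, map_mul, h30, map_natCast, zero_mul, zero_add]
    · intro h
      have hval : ((a.val : ℕ) : ZMod n) = a := ZMod.natCast_rightInverse a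
      have h2 : ((a.val : ℕ) : ZMod 3) = ((j : ℕ) : ZMod 3) := by
        rw [← hval, map_natCast] at h; exact h
      have hmod : a.val % 3 = j := by
        have h4 := (ZMod.natCast_eq_natCast_iff _ _ _).1 h2
        simp only [Nat.ModEq] at h4
        omega
      refine ⟨((a.val / 3 : ℕ) : ZMod n), ?_⟩
      have key : ((3 * (a.val / 3) + j : ℕ) : ZMod n)
          = 3 * ((a.val / 3 : ℕ) : ZMod n) + (j : ZMod n) := by push_cast; ring
      rw [← key, show 3 * (a.val / 3) + j = a.val from by omega, hval]
  have memL : ∀ b : ZMod n,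
      ((Sum.inl b : ZMod n ⊕ ZMod n) ∈
        {x | ∃ i : ZMod n, x = .inl (3 * i + (j : ZMod n)) ∨
          x = .inr (3 * i + (j : ZMod n))}) ↔ f b = j3 := by
    intro b
    rw [← hmem]
    simp only [Set.mem_setOf_eq, Sum.inl.injEq, reduceCtorEq, or_false]
  have memR : ∀ b : ZMod n,
      ((Sum.inr b : ZMod n ⊕ ZMod n) ∈
        {x | ∃ i : ZMod n, x = .inl (3 * i + (j : ZMod n)) ∨
          x = .inr (3 * i + (j : ZMod n))}) ↔ f b = j3 := by
    intro b
    rw [← hmem]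
    simp only [Set.mem_setOf_eq, Sum.inr.injEq, reduceCtorEq, false_or]
  set fk := f ((k : ℕ) : ZMod n) with hfk
  have hc : fk ≠ 0 := by
    rw [hfk, map_natCast]
    intro h
    have hd : 3 ∣ k := (ZMod.natCast_eq_zero_iff k 3).1 h
    omega
  have hone : (1 : ZMod 3) ≠ 0 := by decide
  intro x
  rcases x with a | a
  · -- outer vertex u_a; candidates: inr a, inl (a+1), inl (a-1)
    by_cases h0 : f a = j3
    · refine ⟨.inr a, ⟨(memR a).2 h0, GP_adj_lr.2 rfl⟩, ?_⟩
      rintro (b | b) ⟨hbC, hadj⟩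
      · exfalso
        have hfb : f b = j3 := (memL b).1 hbC
        obtain ⟨hne, hor⟩ := GP_adj_ll.1 hadj
        refine zA (f a) (f b) j3 1 hone h0 hfb ?_
        rcases hor with h | h
        · exact Or.inl (by rw [h, map_add, map_one])
        · exact Or.inr (by rw [h, map_add, map_one])
      · have hab : a = b := GP_adj_lr.1 hadj
        rw [hab]
    · by_cases h1 : f a + 1 = j3
      · refine ⟨.inl (a + 1), ⟨(memL _).2 (by rw [map_add, map_one]; exact h1),
          GP_adj_ll.2 ⟨fun h => one_ne_zero (left_eq_add.1 h), Or.inl rfl⟩⟩, ?_⟩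
        rintro (b | b) ⟨hbC, hadj⟩
        · have hfb : f b = j3 := (memL b).1 hbC
          obtain ⟨hne, hor⟩ := GP_adj_ll.1 hadj
          rcases hor with h | h
          · rw [h]
          · exact absurd (by rw [h, map_add, map_one] : f a = f b + 1)
              (fun hh => zC (f a) (f b) j3 1 hone h1 hfb hh)
        · exfalso
          have hab : a = b := GP_adj_lr.1 hadj
          have hfb : f b = j3 := (memR b).1 hbC
          exact zB (f a) j3 1 hone h1 (hab ▸ hfb)
      · have h2 : f a - 1 = j3 := zD (f a) j3 1 hone h0 h1
        refine ⟨.inl (a - 1), ⟨(memL _).2 (by rw [map_sub, map_one]; exact h2),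
          GP_adj_ll.2 ⟨fun h => one_ne_zero (by
            have := sub_eq_self.1 h.symm; exact this), Or.inr (by ring)⟩⟩, ?_⟩
        rintro (b | b) ⟨hbC, hadj⟩
        · have hfb : f b = j3 := (memL b).1 hbC
          obtain ⟨hne, hor⟩ := GP_adj_ll.1 hadj
          rcases hor with h | h
          · exact absurd (by rw [h, map_add, map_one] : f b = f a + 1)
              (fun hh => zE (f a) (f b) j3 1 hone h2 hfb hh)
          · have : b = a - 1 := by rw [h]; ring
            rw [this]
        · exfalso
          have hab : a = b := GP_adj_lr.1 hadj
          have hfb : f b = j3 := (memR b).1 hbC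
          rw [← hab] at hfb
          exact h0 hfb
  · -- inner vertex v_a; candidates: inl a, inr (a+k), inr (a-k)
    by_cases h0 : f a = j3
    · refine ⟨.inl a, ⟨(memL a).2 h0, GP_adj_rl.2 rfl⟩, ?_⟩
      rintro (b | b) ⟨hbC, hadj⟩
      · have hab : a = b := GP_adj_rl.1 hadj
        rw [hab]
      · exfalso
        have hfb : f b = j3 := (memR b).1 hbC
        obtain ⟨hne, hor⟩ := GP_adj_rr.1 hadj
        refine zA (f a) (f b) j3 fk hc h0 hfb ?_
        rcases hor with h | h
        · exact Or.inl (by rw [h, map_add])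
        · exact Or.inr (by rw [h, map_add])
    · by_cases h1 : f a + fk = j3
      · refine ⟨.inr (a + (k : ZMod n)), ⟨(memR _).2 (by rw [map_add]; exact h1),
          GP_adj_rr.2 ⟨fun h => hk0 (left_eq_add.1 h), Or.inl rfl⟩⟩, ?_⟩
        rintro (b | b) ⟨hbC, hadj⟩
        · exfalso
          have hab : a = b := GP_adj_rl.1 hadj
          have hfb : f b = j3 := (memL b).1 hbC
          exact zB (f a) j3 fk hc h1 (hab ▸ hfb)
        · have hfb : f b = j3 := (memR b).1 hbC
          obtain ⟨hne, hor⟩ := GP_adj_rr.1 hadj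
          rcases hor with h | h
          · rw [h]
          · exact absurd (by rw [h, map_add] : f a = f b + fk)
              (fun hh => zC (f a) (f b) j3 fk hc h1 hfb hh)
      · have h2 : f a - fk = j3 := zD (f a) j3 fk hc h0 h1
        refine ⟨.inr (a - (k : ZMod n)), ⟨(memR _).2 (by rw [map_sub]; exact h2),
          GP_adj_rr.2 ⟨fun h => hk0 (sub_eq_self.1 h.symm), Or.inr (by ring)⟩⟩, ?_⟩
        rintro (b | b) ⟨hbC, hadj⟩
        · exfalso
          have hab : a = b := GP_adj_rl.1 hadj
          have hfb : f b = j3 := (memL b).1 hbC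
          rw [← hab] at hfb
          exact h0 hfb
        · have hfb : f b = j3 := (memR b).1 hbC
          obtain ⟨hne, hor⟩ := GP_adj_rr.1 hadj
          rcases hor with h | h
          · exact absurd (by rw [h, map_add] : f b = f a + fk)
              (fun hh => zE (f a) (f b) j3 fk hc h2 hfb hh)
          · have : b = a - (k : ZMod n) := by rw [h]; ring
            rw [this]
end

section
/- Let n ≥ 3 and k ∈ ℤ_n nonzero, with n ≡ 0 (mod 6) and k ≡ ±1 (mod 6). Then for each j ∈ {0,1,2,3,4,5}, the set C'_j = {u_{6i+j}, u_{6i+j+1}, v_{6i+j+3}, v_{6i+j+4} : i ∈ ℤ_n} is a total perfect code in GP(n,k). -/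
lemma key_aux (n : ℕ) (h6n : (6:ℕ) ∣ n) [NeZero n] (x c : ZMod n) :
    (∃ i : ZMod n, x = 6*i + c) ↔
      ZMod.castHom h6n (ZMod 6) x = ZMod.castHom h6n (ZMod 6) c := by
  constructor
  · rintro ⟨i, rfl⟩
    rw [map_add, map_mul]
    have h6 : (ZMod.castHom h6n (ZMod 6)) (6 : ZMod n) = 0 := by
      rw [show ((6:ZMod n)) = ((6:ℕ):ZMod n) by norm_cast, map_natCast]
      decide
    rw [h6, zero_mul, zero_add]
  · intro hxc
    have h0 : (ZMod.castHom h6n (ZMod 6)) (x - c) = 0 := by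
      rw [map_sub, hxc, sub_self]
    have hdvd : (6:ℕ) ∣ (x - c).val := by
      rw [← ZMod.natCast_eq_zero_iff]
      rw [ZMod.castHom_apply] at h0
      rw [ZMod.natCast_val]
      exact h0
    obtain ⟨t, ht⟩ := hdvd
    refine ⟨(t : ZMod n), ?_⟩
    have hval : ((x - c).val : ZMod n) = x - c := by
      simp [ZMod.natCast_val, ZMod.cast_id]
    have hx : x - c = 6 * (t : ZMod n) := by
      rw [← hval, ht]; push_cast; ring
    linear_combination hx

/-- Lemma 2.3: for n ≡ 0 (mod 6) and k ≡ ±1 (mod 6),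
C'_j = {u_{6i+j}, u_{6i+j+1}, v_{6i+j+3}, v_{6i+j+4} : i ∈ ℤ_n}
is a total perfect code in GP(n,k), for each j ∈ {0,...,5}. -/
theorem stmt_2 (n k : ℕ) (hn : 3 ≤ n) (hk0 : (k : ZMod n) ≠ 0)
    (h6 : n % 6 = 0) (hk6 : k % 6 = 1 ∨ k % 6 = 5) (j : ℕ) (hj : j < 6) :
    IsTotalPerfectCode (GP n k)
      {x | ∃ i : ZMod n, x = .inl (6 * i + (j : ZMod n)) ∨
        x = .inl (6 * i + (j : ZMod n) + 1) ∨
        x = .inr (6 * i + (j : ZMod n) + 3) ∨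
        x = .inr (6 * i + (j : ZMod n) + 4)} := by
  have h6n : (6:ℕ) ∣ n := Nat.dvd_of_mod_eq_zero h6
  have hn0 : n ≠ 0 := by omega
  haveI : NeZero n := ⟨hn0⟩
  set φ := ZMod.castHom h6n (ZMod 6) with hφdef
  set J : ZMod 6 := ((j : ℕ) : ZMod 6) with hJ
  set ψ : ZMod n → ZMod 6 := fun m => φ m - J with hψ
  set C : Set (ZMod n ⊕ ZMod n) :=
      {x | ∃ i : ZMod n, x = .inl (6 * i + (j : ZMod n)) ∨
        x = .inl (6 * i + (j : ZMod n) + 1) ∨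
        x = .inr (6 * i + (j : ZMod n) + 3) ∨
        x = .inr (6 * i + (j : ZMod n) + 4)} with hC
  have hφj : φ ((j : ℕ) : ZMod n) = J := by rw [hJ, map_natCast]
  have key : ∀ x c : ZMod n, (∃ i : ZMod n, x = 6*i + c) ↔ φ x = φ c :=
    fun x c => key_aux n h6n x c
  have ψadd : ∀ m c : ZMod n, ψ (m + c) = ψ m + φ c := by
    intro m c; simp only [hψ, map_add]; ring
  have ψsub : ∀ m c : ZMod n, ψ (m - c) = ψ m - φ c := by
    intro m c; simp only [hψ, map_sub]; ring
  have hone : (1 : ZMod n) ≠ 0 := by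
    intro h
    have h1 : φ 1 = φ 0 := by rw [h]
    simp only [map_one, map_zero] at h1
    exact absurd h1 (by decide)
  have hφ3 : φ (3 : ZMod n) = 3 := by
    rw [show (3 : ZMod n) = ((3:ℕ) : ZMod n) by norm_cast, map_natCast]; norm_num
  have hφ4 : φ (4 : ZMod n) = 4 := by
    rw [show (4 : ZMod n) = ((4:ℕ) : ZMod n) by norm_cast, map_natCast]; norm_num
  have hκ : φ ((k : ZMod n)) = 1 ∨ φ ((k : ZMod n)) = 5 := by
    rw [map_natCast, ← ZMod.natCast_mod k 6]
    rcases hk6 with h | h <;> rw [h]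
    · left; norm_num
    · right; norm_num
  have memL : ∀ m : ZMod n, ((Sum.inl m : ZMod n ⊕ ZMod n) ∈ C) ↔ (ψ m = 0 ∨ ψ m = 1) := by
    intro m
    simp only [hC, Set.mem_setOf_eq, Sum.inl.injEq, reduceCtorEq, or_false, add_assoc]
    rw [exists_or, key m (((j:ℕ)) : ZMod n), key m ((((j:ℕ)) : ZMod n) + 1)]
    simp only [map_add, map_one, hφj, hψ]
    constructor
    · rintro (h | h)
      · exact Or.inl (by rw [h, sub_self])
      · exact Or.inr (by rw [h]; ring)
    · rintro (h | h)
      · exact Or.inl (by linear_combination h)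
      · exact Or.inr (by linear_combination h)
  have memR : ∀ m : ZMod n, ((Sum.inr m : ZMod n ⊕ ZMod n) ∈ C) ↔ (ψ m = 3 ∨ ψ m = 4) := by
    intro m
    simp only [hC, Set.mem_setOf_eq, Sum.inr.injEq, reduceCtorEq, false_or, add_assoc]
    rw [exists_or, key m ((((j:ℕ)) : ZMod n) + 3), key m ((((j:ℕ)) : ZMod n) + 4)]
    simp only [map_add, hφ3, hφ4, hφj, hψ]
    constructor
    · rintro (h | h)
      · exact Or.inl (by rw [h]; ring)
      · exact Or.inr (by rw [h]; ring)
    · rintro (h | h)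
      · exact Or.inl (by linear_combination h)
      · exact Or.inr (by linear_combination h)
  have hsix : ∀ b : ZMod 6, b = 0 ∨ b = 1 ∨ b = 2 ∨ b = 3 ∨ b = 4 ∨ b = 5 := by decide
  intro x
  rcases x with i | i
  · rcases hsix (ψ i) with ha | ha | ha | ha | ha | ha <;>
    (first
      | refine ⟨Sum.inl (i+1), ⟨⟨(memL _).mpr (by rw [ψadd, map_one, ha]; decide),
          ⟨fun h => hone (left_eq_add.mp h), Or.inl rfl⟩⟩, ?_⟩⟩
      | refine ⟨Sum.inl (i-1), ⟨⟨(memL _).mpr (by rw [ψsub, map_one, ha]; decide),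
          ⟨fun h => hone (sub_eq_self.mp h.symm), Or.inr (sub_add_cancel i 1).symm⟩⟩, ?_⟩⟩
      | refine ⟨Sum.inr i, ⟨⟨(memR _).mpr (by rw [ha]; decide), rfl⟩, ?_⟩⟩
     rintro (m | m) ⟨hmC, hadj⟩
     · obtain ⟨hne, h | h⟩ := hadj <;>
       first
         | exact congrArg Sum.inl h
         | exact congrArg Sum.inl (eq_sub_of_add_eq h.symm)
         | (have hb : ψ m = ψ i + φ 1 := by rw [h, ψadd]
            rw [memL m, hb, map_one, ha] at hmC; exact absurd hmC (by decide))
         | (have hb : ψ m = ψ i - φ 1 := by rw [h, ψadd]; ring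
            rw [memL m, hb, map_one, ha] at hmC; exact absurd hmC (by decide))
     · first
         | exact congrArg Sum.inr (show (i:ZMod n) = m from hadj).symm
         | (have h : i = m := hadj
            rw [memR m, ← h, ha] at hmC; exact absurd hmC (by decide)))
  · rcases hκ with hκ1 | hκ1 <;> rcases hsix (ψ i) with ha | ha | ha | ha | ha | ha <;>
    (first
      | refine ⟨Sum.inl i, ⟨⟨(memL _).mpr (by rw [ha]; decide), rfl⟩, ?_⟩⟩
      | refine ⟨Sum.inr (i + (k : ZMod n)), ⟨⟨(memR _).mpr (by rw [ψadd, hκ1, ha]; decide),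
          ⟨fun h => hk0 (left_eq_add.mp h), Or.inl rfl⟩⟩, ?_⟩⟩
      | refine ⟨Sum.inr (i - (k : ZMod n)), ⟨⟨(memR _).mpr (by rw [ψsub, hκ1, ha]; decide),
          ⟨fun h => hk0 (sub_eq_self.mp h.symm), Or.inr (sub_add_cancel i (k : ZMod n)).symm⟩⟩, ?_⟩⟩
     rintro (m | m) ⟨hmC, hadj⟩
     · first
         | exact congrArg Sum.inl (show (i:ZMod n) = m from hadj).symm
         | (have h : i = m := hadj
            rw [memL m, ← h, ha] at hmC; exact absurd hmC (by decide))
     · obtain ⟨hne, h | h⟩ := hadj <;>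
       first
         | exact congrArg Sum.inr h
         | exact congrArg Sum.inr (eq_sub_of_add_eq h.symm)
         | (have hb : ψ m = ψ i + φ ((k : ZMod n)) := by rw [h, ψadd]
            rw [memR m, hb, hκ1, ha] at hmC; exact absurd hmC (by decide))
         | (have hb : ψ m = ψ i - φ ((k : ZMod n)) := by rw [h, ψadd]; ring
            rw [memR m, hb, hκ1, ha] at hmC; exact absurd hmC (by decide)))
end

section
/- Let C be a perfect code in GP(n,k), where U = {u_i : i ∈ ℤ_n} and V = {v_i : i ∈ ℤ_n}. Then 4 divides n and |C ∩ U| = |C ∩ V| = n/4. -/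
lemma GP_ll (n k : ℕ) (i j : ZMod n) :
    (GP n k).Adj (.inl i) (.inl j) ↔ i ≠ j ∧ (j = i + 1 ∨ i = j + 1) := Iff.rfl
lemma GP_lr (n k : ℕ) (i j : ZMod n) :
    (GP n k).Adj (.inl i) (.inr j) ↔ i = j := Iff.rfl
lemma GP_rl (n k : ℕ) (i j : ZMod n) :
    (GP n k).Adj (.inr i) (.inl j) ↔ i = j := Iff.rfl
lemma GP_rr (n k : ℕ) (i j : ZMod n) :
    (GP n k).Adj (.inr i) (.inr j) ↔ i ≠ j ∧ (j = i + (k : ZMod n) ∨ i = j + (k : ZMod n)) :=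
  Iff.rfl

/-- every vertex has a unique element of C in its closed neighborhood -/
lemma dom_unique {V : Type*} {G : SimpleGraph V} {C : Set V} (hC : IsPerfectCode G C) (x : V) :
    ∃! y, y ∈ C ∧ (y = x ∨ G.Adj x y) := by
  by_cases hx : x ∈ C
  · refine ⟨x, ⟨hx, Or.inl rfl⟩, ?_⟩
    rintro y ⟨hyC, rfl | hyA⟩
    · rfl
    · exact absurd hyA (hC.1 x hx y hyC)
  · obtain ⟨y, ⟨hyC, hyA⟩, huniq⟩ := hC.2 x hx
    refine ⟨y, ⟨hyC, Or.inr hyA⟩, ?_⟩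
    rintro z ⟨hzC, rfl | hzA⟩
    · exact absurd hzC hx
    · exact huniq z ⟨hzC, hzA⟩

lemma card_three (n : ℕ) [NeZero n] (d j : ZMod n) (hd : d ≠ 0) (h2d : d + d ≠ 0) :
    ({j - d, j, j + d} : Finset (ZMod n)).card = 3 := by
  rw [Finset.card_insert_of_notMem, Finset.card_insert_of_notMem, Finset.card_singleton]
  · simp only [Finset.mem_singleton]
    intro h; exact hd (by linear_combination -h)
  · simp only [Finset.mem_insert, Finset.mem_singleton]
    rintro (h | h)
    · exact hd (by linear_combination -h)
    · exact h2d (by linear_combination -h)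

lemma outer_count (n k : ℕ) [NeZero n] (h1 : (1 : ZMod n) ≠ 0) (h2 : (1 : ZMod n) + 1 ≠ 0)
    (C : Set (ZMod n ⊕ ZMod n)) [DecidablePred (· ∈ C)] (hC : IsPerfectCode (GP n k) C) :
    n = 3 * (Finset.univ.filter fun m : ZMod n => Sum.inl m ∈ C).card
      + (Finset.univ.filter fun m : ZMod n => Sum.inr m ∈ C).card := by
  classical
  set D : Finset (ZMod n ⊕ ZMod n) := Finset.univ.filter (· ∈ C) with hD
  set Q : ZMod n → (ZMod n ⊕ ZMod n) → Prop :=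
    fun i c => c = Sum.inl i ∨ (GP n k).Adj (Sum.inl i) c with hQ
  -- step A: each row has exactly one element
  have stepA : ∀ i : ZMod n, (D.filter fun c => Q i c).card = 1 := by
    intro i
    obtain ⟨y, ⟨hyC, hyA⟩, huniq⟩ := dom_unique hC (Sum.inl i)
    rw [Finset.card_eq_one]
    refine ⟨y, Finset.eq_singleton_iff_unique_mem.mpr ⟨?_, ?_⟩⟩
    · simp only [hD, hQ, Finset.mem_filter, Finset.mem_univ, true_and]
      exact ⟨hyC, hyA⟩
    · intro c hc
      simp only [hD, hQ, Finset.mem_filter, Finset.mem_univ, true_and] at hc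
      exact huniq c ⟨hc.1, hc.2⟩
  -- swap the double count
  have swap : ∑ i : ZMod n, (D.filter fun c => Q i c).card
      = ∑ c ∈ D, (Finset.univ.filter fun i : ZMod n => Q i c).card := by
    simp only [Finset.card_filter]
    exact Finset.sum_comm
  have lhs : ∑ i : ZMod n, (D.filter fun c => Q i c).card = n := by
    simp [stepA, ZMod.card]
  -- fiber cards
  have fibl : ∀ j : ZMod n, (Finset.univ.filter fun i : ZMod n => Q i (Sum.inl j)).card = 3 := by
    intro j
    have : (Finset.univ.filter fun i : ZMod n => Q i (Sum.inl j)) = {j - 1, j, j + 1} := by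
      ext i
      simp only [hQ, Finset.mem_filter, Finset.mem_univ, true_and, Finset.mem_insert,
        Finset.mem_singleton, Sum.inl.injEq, GP_ll]
      constructor
      · rintro (rfl | ⟨hne, h | h⟩)
        · exact Or.inr (Or.inl rfl)
        · exact Or.inl (by linear_combination -h)
        · exact Or.inr (Or.inr h)
      · rintro (rfl | rfl | rfl)
        · exact Or.inr ⟨fun h => h1 (by linear_combination -h), Or.inl (by ring)⟩
        · exact Or.inl rfl
        · exact Or.inr ⟨fun h => h1 (by linear_combination h), Or.inr rfl⟩
    rw [this]
    exact card_three n 1 j h1 h2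
  have fibr : ∀ j : ZMod n, (Finset.univ.filter fun i : ZMod n => Q i (Sum.inr j)).card = 1 := by
    intro j
    have : (Finset.univ.filter fun i : ZMod n => Q i (Sum.inr j)) = {j} := by
      ext i
      simp only [hQ, Finset.mem_filter, Finset.mem_univ, true_and, Finset.mem_singleton, GP_lr]
      constructor
      · rintro (h | h)
        · exact absurd h (by simp)
        · exact h
      · rintro rfl; exact Or.inr rfl
    rw [this, Finset.card_singleton]
  -- compute the rhs
  have rhs : ∑ c ∈ D, (Finset.univ.filter fun i : ZMod n => Q i c).card
      = 3 * (Finset.univ.filter fun m : ZMod n => Sum.inl m ∈ C).card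
        + (Finset.univ.filter fun m : ZMod n => Sum.inr m ∈ C).card := by
    rw [hD, Finset.sum_filter, Fintype.sum_sum_type]
    simp only [fibl, fibr]
    rw [← Finset.sum_filter, ← Finset.sum_filter, Finset.sum_const, Finset.sum_const,
      smul_eq_mul, smul_eq_mul, mul_comm, mul_one]
  exact lhs.symm.trans (swap.trans rhs)

lemma inner_count (n k : ℕ) [NeZero n] (hk : (k : ZMod n) ≠ 0) (h2k : (k : ZMod n) + k ≠ 0)
    (C : Set (ZMod n ⊕ ZMod n)) [DecidablePred (· ∈ C)] (hC : IsPerfectCode (GP n k) C) :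
    n = 3 * (Finset.univ.filter fun m : ZMod n => Sum.inr m ∈ C).card
      + (Finset.univ.filter fun m : ZMod n => Sum.inl m ∈ C).card := by
  classical
  set D : Finset (ZMod n ⊕ ZMod n) := Finset.univ.filter (· ∈ C) with hD
  set Q : ZMod n → (ZMod n ⊕ ZMod n) → Prop :=
    fun i c => c = Sum.inr i ∨ (GP n k).Adj (Sum.inr i) c with hQ
  have stepA : ∀ i : ZMod n, (D.filter fun c => Q i c).card = 1 := by
    intro i
    obtain ⟨y, ⟨hyC, hyA⟩, huniq⟩ := dom_unique hC (Sum.inr i)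
    rw [Finset.card_eq_one]
    refine ⟨y, Finset.eq_singleton_iff_unique_mem.mpr ⟨?_, ?_⟩⟩
    · simp only [hD, hQ, Finset.mem_filter, Finset.mem_univ, true_and]
      exact ⟨hyC, hyA⟩
    · intro c hc
      simp only [hD, hQ, Finset.mem_filter, Finset.mem_univ, true_and] at hc
      exact huniq c ⟨hc.1, hc.2⟩
  have swap : ∑ i : ZMod n, (D.filter fun c => Q i c).card
      = ∑ c ∈ D, (Finset.univ.filter fun i : ZMod n => Q i c).card := by
    simp only [Finset.card_filter]
    exact Finset.sum_comm
  have lhs : ∑ i : ZMod n, (D.filter fun c => Q i c).card = n := by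
    simp [stepA, ZMod.card]
  have fibr : ∀ j : ZMod n, (Finset.univ.filter fun i : ZMod n => Q i (Sum.inr j)).card = 3 := by
    intro j
    have : (Finset.univ.filter fun i : ZMod n => Q i (Sum.inr j)) = {j - k, j, j + k} := by
      ext i
      simp only [hQ, Finset.mem_filter, Finset.mem_univ, true_and, Finset.mem_insert,
        Finset.mem_singleton, Sum.inr.injEq, GP_rr]
      constructor
      · rintro (rfl | ⟨hne, h | h⟩)
        · exact Or.inr (Or.inl rfl)
        · exact Or.inl (by linear_combination -h)
        · exact Or.inr (Or.inr h)
      · rintro (rfl | rfl | rfl)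
        · exact Or.inr ⟨fun h => hk (by linear_combination -h), Or.inl (by ring)⟩
        · exact Or.inl rfl
        · exact Or.inr ⟨fun h => hk (by linear_combination h), Or.inr rfl⟩
    rw [this]
    exact card_three n k j hk h2k
  have fibl : ∀ j : ZMod n, (Finset.univ.filter fun i : ZMod n => Q i (Sum.inl j)).card = 1 := by
    intro j
    have : (Finset.univ.filter fun i : ZMod n => Q i (Sum.inl j)) = {j} := by
      ext i
      simp only [hQ, Finset.mem_filter, Finset.mem_univ, true_and, Finset.mem_singleton, GP_rl]
      constructor
      · rintro (h | h)
        · exact absurd h (by simp)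
        · exact h
      · rintro rfl; exact Or.inr rfl
    rw [this, Finset.card_singleton]
  have rhs : ∑ c ∈ D, (Finset.univ.filter fun i : ZMod n => Q i c).card
      = 3 * (Finset.univ.filter fun m : ZMod n => Sum.inr m ∈ C).card
        + (Finset.univ.filter fun m : ZMod n => Sum.inl m ∈ C).card := by
    rw [hD, Finset.sum_filter, Fintype.sum_sum_type]
    simp only [fibl, fibr]
    rw [← Finset.sum_filter, ← Finset.sum_filter, Finset.sum_const, Finset.sum_const,
      smul_eq_mul, smul_eq_mul]
    ring
  exact lhs.symm.trans (swap.trans rhs)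

lemma deg_case (n k : ℕ) (h1 : (1 : ZMod n) ≠ 0) (hk0 : (k : ZMod n) ≠ 0)
    (h2k : (k : ZMod n) + k = 0) (C : Set (ZMod n ⊕ ZMod n))
    (hC : IsPerfectCode (GP n k) C) : False := by
  obtain ⟨hind, hdom⟩ := hC
  -- there is an outer code vertex
  have hU : ∃ j : ZMod n, Sum.inl j ∈ C := by
    by_contra hno
    push_neg at hno
    have hall : ∀ i : ZMod n, Sum.inr i ∈ C := by
      intro i
      obtain ⟨y, ⟨hyC, hyA⟩, -⟩ := hdom (Sum.inl i) (hno i)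
      match y with
      | .inl m => exact absurd hyC (hno m)
      | .inr m =>
        have : i = m := (GP_lr n k i m).mp hyA
        exact this ▸ hyC
    refine hind _ (hall 0) _ (hall k) ((GP_rr n k 0 k).mpr ⟨fun h => hk0 h.symm, Or.inl (by ring)⟩)
  obtain ⟨j, hj⟩ := hU
  have hvj : Sum.inr j ∉ C := fun h => hind _ hj _ h ((GP_lr n k j j).mpr rfl)
  have hvjk : Sum.inr (j + k) ∉ C := by
    intro h
    obtain ⟨y, -, huniq⟩ := hdom (Sum.inr j) hvj
    have e1 := huniq _ ⟨hj, (GP_rl n k j j).mpr rfl⟩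
    have e2 := huniq _ ⟨h, (GP_rr n k j (j + k)).mpr
      ⟨fun hh => hk0 (by linear_combination -hh), Or.inl rfl⟩⟩
    exact Sum.inl_ne_inr (e1.trans e2.symm)
  have hujk : Sum.inl (j + k) ∈ C := by
    obtain ⟨y, ⟨hyC, hyA⟩, -⟩ := hdom (Sum.inr (j + k)) hvjk
    match y with
    | .inl m =>
      have : j + k = m := (GP_rl n k _ m).mp hyA
      exact this ▸ hyC
    | .inr m =>
      obtain ⟨hne, hor⟩ := (GP_rr n k _ m).mp hyA
      have hm : m = j := by
        rcases hor with h | h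
        · linear_combination h + h2k
        · linear_combination -h
      exact absurd (hm ▸ hyC) hvj
  have huj1 : Sum.inl (j + 1) ∉ C := fun h => hind _ hj _ h
    ((GP_ll n k j (j + 1)).mpr ⟨fun hh => h1 (by linear_combination -hh), Or.inl rfl⟩)
  have hvj1 : Sum.inr (j + 1) ∉ C := by
    intro h
    obtain ⟨y, -, huniq⟩ := hdom (Sum.inl (j + 1)) huj1
    have e1 := huniq _ ⟨hj, (GP_ll n k (j + 1) j).mpr
      ⟨fun hh => h1 (by linear_combination hh), Or.inr rfl⟩⟩
    have e2 := huniq _ ⟨h, (GP_lr n k (j + 1) (j + 1)).mpr rfl⟩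
    exact Sum.inl_ne_inr (e1.trans e2.symm)
  have hvj1k : Sum.inr (j + 1 + k) ∈ C := by
    obtain ⟨y, ⟨hyC, hyA⟩, -⟩ := hdom (Sum.inr (j + 1)) hvj1
    match y with
    | .inl m =>
      have : j + 1 = m := (GP_rl n k _ m).mp hyA
      exact absurd (this ▸ hyC) huj1
    | .inr m =>
      obtain ⟨hne, hor⟩ := (GP_rr n k _ m).mp hyA
      have hm : m = j + 1 + k := by
        rcases hor with h | h
        · exact h
        · linear_combination -h - h2k
      exact hm ▸ hyC
  have hujk1 : Sum.inl (j + k + 1) ∉ C := fun h => hind _ hujk _ h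
    ((GP_ll n k (j + k) (j + k + 1)).mpr ⟨fun hh => h1 (by linear_combination -hh), Or.inl rfl⟩)
  obtain ⟨y, -, huniq⟩ := hdom (Sum.inl (j + k + 1)) hujk1
  have e1 := huniq _ ⟨hujk, (GP_ll n k (j + k + 1) (j + k)).mpr
    ⟨fun hh => h1 (by linear_combination hh), Or.inr rfl⟩⟩
  have e2 := huniq _ ⟨hvj1k, (GP_lr n k (j + k + 1) (j + 1 + k)).mpr (by ring)⟩
  exact Sum.inl_ne_inr (e1.trans e2.symm)

/-- Step 1 of the proof of Theorem 1.1: if C is a perfect code in GP(n,k),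
then 4 ∣ n and |C ∩ U| = |C ∩ V| = n/4. -/
theorem stmt_3 (n k : ℕ) (hn : 3 ≤ n) (hk0 : (k : ZMod n) ≠ 0)
    (C : Set (ZMod n ⊕ ZMod n)) (hC : IsPerfectCode (GP n k) C) :
    4 ∣ n ∧ Nat.card {m : ZMod n | Sum.inl m ∈ C} = n / 4 ∧
      Nat.card {m : ZMod n | Sum.inr m ∈ C} = n / 4 := by
  haveI : NeZero n := ⟨by omega⟩
  classical
  have h1 : (1 : ZMod n) ≠ 0 := by
    intro h
    have h2 := (ZMod.natCast_eq_zero_iff 1 n).mp (by push_cast; exact h)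
    have := Nat.le_of_dvd one_pos h2
    omega
  have h2 : (1 : ZMod n) + 1 ≠ 0 := by
    intro h
    have h2 := (ZMod.natCast_eq_zero_iff 2 n).mp (by push_cast; linear_combination h)
    have := Nat.le_of_dvd two_pos h2
    omega
  by_cases h2k : (k : ZMod n) + k = 0
  · exact absurd (deg_case n k h1 hk0 h2k C hC) id
  · have e1 := outer_count n k h1 h2 C hC
    have e2 := inner_count n k hk0 h2k C hC
    have hA : Nat.card {m : ZMod n | Sum.inl m ∈ C}
        = (Finset.univ.filter fun m : ZMod n => Sum.inl m ∈ C).card := by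
      rw [Nat.card_eq_card_toFinset, Set.toFinset_setOf]
    have hB : Nat.card {m : ZMod n | Sum.inr m ∈ C}
        = (Finset.univ.filter fun m : ZMod n => Sum.inr m ∈ C).card := by
      rw [Nat.card_eq_card_toFinset, Set.toFinset_setOf]
    refine ⟨by omega, by omega, by omega⟩
end

section
/- Let C be a perfect code in GP(n,k). If u_ℓ, u_{ℓ+1}, u_{ℓ+2}, u_{ℓ+3} ∉ C for some ℓ ∈ ℤ_n, then a contradiction arises: the vertex v_ℓ is neither in C nor adjacent to a vertex of C. Consequently, no four consecutive outer vertices can all avoid a perfect code. -/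
section helpers
variable {n k : ℕ} {C : Set (ZMod n ⊕ ZMod n)}

lemma unique_nbr (hC : IsPerfectCode (GP n k) C) {x a b : ZMod n ⊕ ZMod n} (hx : x ∉ C) (ha : a ∈ C) (hb : b ∈ C)
    (haj : (GP n k).Adj x a) (hbj : (GP n k).Adj x b) : a = b := by
  obtain ⟨y, -, hy⟩ := hC.2 x hx
  rw [hy a ⟨ha, haj⟩, hy b ⟨hb, hbj⟩]

lemma outer_nbr (hC : IsPerfectCode (GP n k) C) (j : ZMod n) (hj : Sum.inl j ∉ C) :
    Sum.inl (j - 1) ∈ C ∨ Sum.inl (j + 1) ∈ C ∨ Sum.inr j ∈ C := by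
  obtain ⟨y, ⟨hyC, hyadj⟩, -⟩ := hC.2 _ hj
  rcases y with m | m
  · have h' : j ≠ m ∧ (m = j + 1 ∨ j = m + 1) := hyadj
    obtain ⟨-, h | h⟩ := h'
    · right; left; rwa [← h]
    · left; have e : m = j - 1 := by rw [h]; ring
      rwa [← e]
  · have h' : j = m := hyadj
    right; right; rwa [h']

lemma inner_nbr (hC : IsPerfectCode (GP n k) C) (j : ZMod n) (hj : Sum.inr j ∉ C) :
    Sum.inl j ∈ C ∨ Sum.inr (j + k) ∈ C ∨ Sum.inr (j - k) ∈ C := by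
  obtain ⟨y, ⟨hyC, hyadj⟩, -⟩ := hC.2 _ hj
  rcases y with m | m
  · have h' : j = m := hyadj
    left; rwa [h']
  · have h' : j ≠ m ∧ (m = j + k ∨ j = m + k) := hyadj
    obtain ⟨-, h | h⟩ := h'
    · right; left; rwa [← h]
    · right; right
      have e : m = j - k := by rw [h]; ring
      rwa [← e]

lemma out_not (hC : IsPerfectCode (GP n k) C) {j m : ZMod n} (hm : Sum.inr m ∈ C) (hne : j ≠ m)
    (h : m = j + k ∨ j = m + k) : Sum.inr j ∉ C ∧ Sum.inl j ∉ C := by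
  have hadj : (GP n k).Adj (Sum.inr j) (Sum.inr m) := ⟨hne, h⟩
  have hjn : Sum.inr j ∉ C := fun hh => hC.1 _ hh _ hm hadj
  refine ⟨hjn, fun hh => ?_⟩
  have h2 : (GP n k).Adj (Sum.inr j) (Sum.inl j) := rfl
  have := unique_nbr hC hjn hm hh hadj h2
  simp at this

lemma mid (hC : IsPerfectCode (GP n k) C) {j : ZMod n} (ha : Sum.inl (j - 1) ∉ C) (hb : Sum.inl j ∉ C)
    (hc : Sum.inl (j + 1) ∉ C) : Sum.inr j ∈ C := by
  rcases outer_nbr hC j hb with h | h | h <;> tauto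

end helpers

lemma ext_one {n k : ℕ} (hn : 3 ≤ n) (hk0 : (k : ZMod n) ≠ 0)
    {C : Set (ZMod n ⊕ ZMod n)} (hC : IsPerfectCode (GP n k) C)
    (l : ZMod n) (h0 : Sum.inl l ∉ C) (h1 : Sum.inl (l + 1) ∉ C)
    (h2 : Sum.inl (l + 2) ∉ C) (h3 : Sum.inl (l + 3) ∉ C) :
    Sum.inl (l + 4) ∉ C := by
  haveI : Fact (1 < n) := ⟨by omega⟩
  have hka : ∀ a b : ZMod n, a = b + k → a - k = b := by
    intro a b h; rw [h]; ring
  have hne : ∀ a : ZMod n, a + k ≠ a := by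
    intro a h
    apply hk0
    have : a + (k : ZMod n) = a + 0 := by rw [add_zero]; exact h
    exact add_left_cancel this
  have hne' : ∀ a : ZMod n, a - k ≠ a := by
    intro a h
    apply hk0
    have : a - k + k = a + k := by rw [h]
    have h2 : a = a + k := by rw [← this]; ring
    exact (hne a h2.symm).elim
  -- v_{l+1}, v_{l+2} ∈ C
  have hv1 : Sum.inr (l + 1) ∈ C :=
    mid hC (by rw [show l + 1 - 1 = l by ring]; exact h0) h1
      (by rw [show l + 1 + 1 = l + 2 by ring]; exact h2)
  have hv2 : Sum.inr (l + 2) ∈ C :=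
    mid hC (by rw [show l + 2 - 1 = l + 1 by ring]; exact h1) h2
      (by rw [show l + 2 + 1 = l + 3 by ring]; exact h3)
  -- neighbors of v_{l+1}, v_{l+2} along inner cycle are out, and so are the u above them
  have n1p := out_not hC hv1 (hne (l+1)) (Or.inr rfl)
  have n2p := out_not hC hv2 (hne (l+2)) (Or.inr rfl)
  have n1m := out_not hC hv1 (hne' (l+1)) (Or.inl (by ring))
  have n2m := out_not hC hv2 (hne' (l+2)) (Or.inl (by ring))
  -- forced outer code vertices u_{l+3+k}, u_{l+3-k}
  have hB : Sum.inl (l + 3 + k) ∈ C := by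
    rcases outer_nbr hC (l + 2 + k) n2p.2 with h | h | h
    · rw [show l + 2 + k - 1 = l + 1 + k by ring] at h; exact absurd h n1p.2
    · rwa [show l + 2 + k + 1 = l + 3 + k by ring] at h
    · exact absurd h n2p.1
  have hD : Sum.inl (l + 3 - k) ∈ C := by
    rcases outer_nbr hC (l + 2 - k) n2m.2 with h | h | h
    · rw [show l + 2 - k - 1 = l + 1 - k by ring] at h; exact absurd h n1m.2
    · rwa [show l + 2 - k + 1 = l + 3 - k by ring] at h
    · exact absurd h n2m.1
  -- hence v_{l+3+k}, v_{l+3-k} ∉ C, hence v_{l+3} ∈ C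
  have nv3p : Sum.inr (l + 3 + k) ∉ C := fun h => hC.1 _ hB _ h rfl
  have nv3m : Sum.inr (l + 3 - k) ∉ C := fun h => hC.1 _ hD _ h rfl
  have hv3 : Sum.inr (l + 3) ∈ C := by
    by_contra hc
    rcases inner_nbr hC (l + 3) hc with h | h | h
    · exact h3 h
    · exact nv3p h
    · exact nv3m h
  -- conclude
  intro h4
  have hadj34 : (GP n k).Adj (Sum.inl (l + 3)) (Sum.inl (l + 4)) := by
    refine ⟨?_, Or.inl (by ring)⟩
    intro h
    have h' : (3 : ZMod n) = 4 := add_left_cancel h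
    have : (1 : ZMod n) = 0 := by linear_combination -h'
    exact one_ne_zero this
  have := unique_nbr hC h3 hv3 h4 rfl hadj34
  simp at this


/-- Step 2 of the proof of Theorem 1.1: no four consecutive outer vertices can
all avoid a perfect code. -/
theorem stmt_4 (n k : ℕ) (hn : 3 ≤ n) (hk0 : (k : ZMod n) ≠ 0)
    (C : Set (ZMod n ⊕ ZMod n)) (hC : IsPerfectCode (GP n k) C)
    (l : ZMod n) (h0 : Sum.inl l ∉ C) (h1 : Sum.inl (l + 1) ∉ C)
    (h2 : Sum.inl (l + 2) ∉ C) (h3 : Sum.inl (l + 3) ∉ C) :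
    False := by
  haveI : NeZero n := ⟨by omega⟩
  have hall4 : ∀ m : ℕ, Sum.inl (l + (m : ZMod n)) ∉ C ∧ Sum.inl (l + m + 1) ∉ C ∧
      Sum.inl (l + m + 2) ∉ C ∧ Sum.inl (l + m + 3) ∉ C := by
    intro m
    induction m with
    | zero => simpa using ⟨h0, h1, h2, h3⟩
    | succ m ih =>
      obtain ⟨a, b, c, d⟩ := ih
      have e : (((m + 1 : ℕ)) : ZMod n) = (m : ZMod n) + 1 := by push_cast; ring
      rw [e]
      refine ⟨by rwa [← add_assoc], ?_, ?_, ?_⟩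
      · rw [show l + ((m : ZMod n) + 1) + 1 = l + m + 2 by ring]; exact c
      · rw [show l + ((m : ZMod n) + 1) + 2 = l + m + 3 by ring]; exact d
      · rw [show l + ((m : ZMod n) + 1) + 3 = l + m + 4 by ring]
        exact ext_one hn hk0 hC (l + m) a b c d
  have hallZ : ∀ j : ZMod n, Sum.inl j ∉ C := by
    intro j
    have := (hall4 ((j - l).val)).1
    rwa [ZMod.natCast_val, ZMod.cast_id, show l + (j - l) = j by ring] at this
  have hinner : ∀ j : ZMod n, Sum.inr j ∈ C := by
    intro j
    rcases outer_nbr hC j (hallZ j) with h | h | h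
    · exact absurd h (hallZ _)
    · exact absurd h (hallZ _)
    · exact h
  exact hC.1 _ (hinner 0) _ (hinner k) ⟨Ne.symm hk0, Or.inl (zero_add _).symm⟩
end

section
/- Let C be a perfect code in GP(n,k) with C ∩ U = {u_{4i+j} : i ∈ ℤ_n} for some j ∈ {0,1,2,3}, where U = {u_i : i ∈ ℤ_n}. Then C ∩ V = {v_{4i+j+2} : i ∈ ℤ_n}, where V = {v_i : i ∈ ℤ_n}; hence C = {u_{4i+j}, v_{4i+j+2} : i ∈ ℤ_n}. -/
/-- Step 3 of the proof of Theorem 1.1: if C is a perfect code in GP(n,k) with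
C ∩ U = {u_{4i+j} : i ∈ ℤ_n}, then C ∩ V = {v_{4i+j+2} : i ∈ ℤ_n}, hence
C = {u_{4i+j}, v_{4i+j+2} : i ∈ ℤ_n}. -/
theorem stmt_5 (n k : ℕ) (hn : 3 ≤ n) (hk0 : (k : ZMod n) ≠ 0) (h4 : n % 4 = 0)
    (C : Set (ZMod n ⊕ ZMod n)) (hC : IsPerfectCode (GP n k) C)
    (j : ℕ) (hj : j < 4)
    (hU : ∀ m : ZMod n, Sum.inl m ∈ C ↔ ∃ i : ZMod n, m = 4 * i + (j : ZMod n)) :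
    (∀ m : ZMod n, Sum.inr m ∈ C ↔ ∃ i : ZMod n, m = 4 * i + (j : ZMod n) + 2) ∧
    C = {x | ∃ i : ZMod n, x = .inl (4 * i + (j : ZMod n)) ∨
      x = .inr (4 * i + (j : ZMod n) + 2)} := by
  haveI : NeZero n := ⟨by omega⟩
  have hd : (4:ℕ) ∣ n := Nat.dvd_of_mod_eq_zero h4
  set φ := ZMod.castHom hd (ZMod 4) with hφdef
  have key : ∀ m c : ZMod n, (∃ i : ZMod n, m = 4*i + c) ↔ φ m = φ c := by
    intro m c
    constructor
    · rintro ⟨i, rfl⟩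
      have h40 : (4 : ZMod 4) = 0 := by decide
      push_cast [map_add, map_mul, map_ofNat]
      rw [h40]; ring
    · intro h
      have h0 : φ (m - c) = 0 := by rw [map_sub, h, sub_self]
      rw [ZMod.castHom_apply, ← ZMod.natCast_val] at h0
      obtain ⟨t, ht⟩ := (ZMod.natCast_eq_zero_iff _ _).1 h0
      refine ⟨(t : ZMod n), ?_⟩
      have hmc : m - c = (((m - c).val : ℕ) : ZMod n) := (ZMod.natCast_rightInverse (m - c)).symm
      rw [ht] at hmc
      push_cast at hmc
      linear_combination hmc
  have hone : (1 : ZMod n) ≠ 0 := by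
    intro h
    have := congrArg φ h
    rw [map_one, map_zero] at this
    exact absurd this (by decide)
  have hU' : ∀ m : ZMod n, Sum.inl m ∈ C ↔ φ m = (j : ZMod 4) := by
    intro m
    rw [hU m, key]
    simp [hφdef]
  -- adjacency facts
  have adj_succ : ∀ a : ZMod n, (GP n k).Adj (.inl a) (.inl (a+1)) := by
    intro a
    refine ⟨fun h => hone ?_, Or.inl rfl⟩
    linear_combination -h
  have adj_pred : ∀ a : ZMod n, (GP n k).Adj (.inl a) (.inl (a-1)) := by
    intro a
    refine ⟨fun h => hone ?_, Or.inr (by ring)⟩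
    linear_combination h
  have adj_uv : ∀ a : ZMod n, (GP n k).Adj (.inl a) (.inr a) := fun a => rfl
  have hV : ∀ m : ZMod n, Sum.inr m ∈ C ↔ φ m = (j : ZMod 4) + 2 := by
    intro m
    constructor
    · intro hm
      have hcases : ∀ a b : ZMod 4, a = b ∨ a = b + 1 ∨ a = b + 2 ∨ a = b + 3 := by decide
      rcases hcases (φ m) (j : ZMod 4) with h | h | h | h
      · exact absurd (adj_uv m) (hC.1 _ ((hU' m).2 h) _ hm)
      · -- u_{m-1} ∈ C and v_m ∈ C both adjacent to u_m ∉ C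
        have hum : Sum.inl m ∉ C := by
          rw [hU', h]
          have : ∀ b : ZMod 4, b + 1 ≠ b := by decide
          exact this _
        have hump : Sum.inl (m-1) ∈ C := by
          rw [hU']
          rw [map_sub, map_one, h]; ring
        obtain ⟨y, -, hy2⟩ := hC.2 _ hum
        have e1 := hy2 (.inl (m-1)) ⟨hump, adj_pred m⟩
        have e2 := hy2 (.inr m) ⟨hm, adj_uv m⟩
        exact absurd (e1.trans e2.symm) (by simp)
      · rw [h]
      · have hum : Sum.inl m ∉ C := by
          rw [hU', h]
          have : ∀ b : ZMod 4, b + 3 ≠ b := by decide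
          exact this _
        have hump : Sum.inl (m+1) ∈ C := by
          rw [hU', map_add, map_one, h]
          have : ∀ b : ZMod 4, b + 3 + 1 = b := by decide
          exact this _
        obtain ⟨y, -, hy2⟩ := hC.2 _ hum
        have e1 := hy2 (.inl (m+1)) ⟨hump, adj_succ m⟩
        have e2 := hy2 (.inr m) ⟨hm, adj_uv m⟩
        exact absurd (e1.trans e2.symm) (by simp)
    · intro h
      have hne2 : ∀ b : ZMod 4, b + 2 ≠ b := by decide
      have hum : Sum.inl m ∉ C := by rw [hU', h]; exact hne2 _
      obtain ⟨y, ⟨hyC, hyadj⟩, -⟩ := hC.2 _ hum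
      match y, hyadj with
      | .inl p, hyadj =>
        exfalso
        obtain ⟨-, hp | hp⟩ := hyadj
        · have := (hU' p).1 hyC
          rw [hp, map_add, map_one, h] at this
          have h3 : ∀ b : ZMod 4, b + 2 + 1 ≠ b := by decide
          exact h3 _ this
        · have := (hU' p).1 hyC
          have hp' : p = m - 1 := by linear_combination -hp
          rw [hp', map_sub, map_one, h] at this
          have h1 : ∀ b : ZMod 4, b + 2 - 1 ≠ b := by decide
          exact h1 _ this
      | .inr p, hyadj =>
        have hmp : m = p := hyadj
        rwa [← hmp] at hyC
  have hφj2 : φ ((j : ZMod n) + 2) = (j : ZMod 4) + 2 := by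
    rw [map_add, map_ofNat, map_natCast]
  have part1 : ∀ m : ZMod n, Sum.inr m ∈ C ↔ ∃ i : ZMod n, m = 4 * i + (j : ZMod n) + 2 := by
    intro m
    rw [hV m, ← hφj2, ← key]
    simp [add_assoc]
  refine ⟨part1, ?_⟩
  ext x
  match x with
  | .inl m =>
    simp only [Set.mem_setOf_eq, Sum.inl.injEq, reduceCtorEq, or_false]
    exact hU m
  | .inr m =>
    simp only [Set.mem_setOf_eq, Sum.inr.injEq, reduceCtorEq, false_or]
    exact part1 m
end

section
/- Let C = {u_{4i+j}, v_{4i+j+2} : i ∈ ℤ_n} be a perfect code in GP(n,k) for some j ∈ {0,1,2,3} and n ≡ 0 (mod 4). Then k is odd. -/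
lemma aux_mem_iff (n : ℕ) (hn3 : 3 ≤ n) (hdvd : 4 ∣ n) (a c : ZMod n) :
    (∃ i : ZMod n, a = 4 * i + c) ↔
      ZMod.castHom hdvd (ZMod 4) a = ZMod.castHom hdvd (ZMod 4) c := by
  haveI : NeZero n := ⟨by omega⟩
  constructor
  · rintro ⟨i, rfl⟩
    rw [map_add, map_mul, map_ofNat]
    have : (4 : ZMod 4) = 0 := by decide
    rw [this, zero_mul, zero_add]
  · intro h
    have h0 : ZMod.castHom hdvd (ZMod 4) (a - c) = 0 := by rw [map_sub, h, sub_self]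
    rw [ZMod.castHom_apply] at h0
    have hv : ((a - c).val : ZMod 4) = 0 := by rw [ZMod.natCast_val]; exact h0
    have hdv : (4:ℕ) ∣ (a - c).val := (ZMod.natCast_eq_zero_iff _ _).mp hv
    obtain ⟨m, hm⟩ := hdv
    refine ⟨(m : ZMod n), ?_⟩
    have h2 : ((a - c).val : ZMod n) = a - c := by rw [ZMod.natCast_val, ZMod.cast_id]
    rw [hm] at h2
    push_cast at h2
    rw [h2]; ring

/-- Step 4 of the proof of Theorem 1.1: if {u_{4i+j}, v_{4i+j+2} : i ∈ ℤ_n} is a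
perfect code in GP(n,k) with n ≡ 0 (mod 4), then k is odd. -/
theorem stmt_6 (n k : ℕ) (hn : 3 ≤ n) (hk0 : (k : ZMod n) ≠ 0) (h4 : n % 4 = 0)
    (j : ℕ) (hj : j < 4)
    (hC : IsPerfectCode (GP n k)
      {x | ∃ i : ZMod n, x = .inl (4 * i + (j : ZMod n)) ∨
        x = .inr (4 * i + (j : ZMod n) + 2)}) :
    k % 2 = 1 := by
  by_contra hodd
  have hk2 : k % 2 = 0 := by omega
  have hdvd : 4 ∣ n := Nat.dvd_of_mod_eq_zero h4
  set f := ZMod.castHom hdvd (ZMod 4) with hf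
  have hfj : f ((j : ℕ) : ZMod n) = ((j : ℕ) : ZMod 4) := map_natCast f j
  have memL : ∀ a : ZMod n,
      (Sum.inl a ∈ {x : ZMod n ⊕ ZMod n | ∃ i : ZMod n, x = .inl (4 * i + (j : ZMod n)) ∨
        x = .inr (4 * i + (j : ZMod n) + 2)}) ↔ f a = (j : ZMod 4) := by
    intro a
    simp only [Set.mem_setOf_eq]
    constructor
    · rintro ⟨i, hi | hi⟩
      · rw [Sum.inl.injEq] at hi
        rw [← hfj]
        exact (aux_mem_iff n hn hdvd a _ ).mp ⟨i, hi⟩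
      · exact absurd hi (by simp)
    · intro h
      obtain ⟨i, hi⟩ := (aux_mem_iff n hn hdvd a ((j:ℕ) : ZMod n)).mpr (by rw [h, hfj])
      exact ⟨i, Or.inl (by rw [hi])⟩
  have memR : ∀ a : ZMod n,
      (Sum.inr a ∈ {x : ZMod n ⊕ ZMod n | ∃ i : ZMod n, x = .inl (4 * i + (j : ZMod n)) ∨
        x = .inr (4 * i + (j : ZMod n) + 2)}) ↔ f a = (j : ZMod 4) + 2 := by
    intro a
    have hc : f (((j:ℕ) : ZMod n) + 2) = (j : ZMod 4) + 2 := by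
      rw [map_add, hfj, map_ofNat]
    simp only [Set.mem_setOf_eq]
    constructor
    · rintro ⟨i, hi | hi⟩
      · exact absurd hi (by simp)
      · rw [Sum.inr.injEq] at hi
        rw [← hc]
        exact (aux_mem_iff n hn hdvd a _).mp ⟨i, by rw [hi]; ring⟩
    · intro h
      obtain ⟨i, hi⟩ := (aux_mem_iff n hn hdvd a (((j:ℕ) : ZMod n) + 2)).mpr (by rw [h, hc])
      exact ⟨i, Or.inr (by rw [hi]; ring)⟩
  have hcase : k % 4 = 0 ∨ k % 4 = 2 := by omega
  rcases hcase with hk4n | hk4n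
  · -- k ≡ 0 (mod 4)
    have hk4 : (k : ZMod 4) = 0 := by rw [← ZMod.natCast_mod k 4, hk4n]; rfl
    have hx : (Sum.inr (((j:ℕ) : ZMod n) + 1) : ZMod n ⊕ ZMod n) ∉
        {x : ZMod n ⊕ ZMod n | ∃ i : ZMod n, x = .inl (4 * i + (j : ZMod n)) ∨
          x = .inr (4 * i + (j : ZMod n) + 2)} := by
      rw [memR, map_add, hfj, map_one]
      intro h
      have := add_left_cancel h
      exact absurd this (by decide)
    obtain ⟨y, ⟨hyC, hyA⟩, -⟩ := hC.2 _ hx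
    rcases y with b | b
    · have hb : ((j:ℕ) : ZMod n) + 1 = b := hyA
      rw [← hb, memL, map_add, hfj, map_one] at hyC
      exact absurd (add_eq_left.mp hyC) (by decide)
    · have hb : ((j:ℕ) : ZMod n) + 1 ≠ b ∧
        (b = ((j:ℕ) : ZMod n) + 1 + (k : ZMod n) ∨ ((j:ℕ) : ZMod n) + 1 = b + (k : ZMod n)) := hyA
      rw [memR] at hyC
      rcases hb.2 with hb2 | hb2
      · rw [hb2, map_add, map_add, hfj, map_one, map_natCast, hk4, add_zero] at hyC
        exact absurd (add_left_cancel hyC) (by decide)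
      · have : f (((j:ℕ) : ZMod n) + 1) = f b + (k : ZMod 4) := by
          rw [hb2, map_add, map_natCast]
        rw [hk4, add_zero, hyC, map_add, hfj, map_one] at this
        exact absurd (add_left_cancel this) (by decide)
  · -- k ≡ 2 (mod 4)
    have hk4 : (k : ZMod 4) = 2 := by rw [← ZMod.natCast_mod k 4, hk4n]; rfl
    have hx : (Sum.inr ((j:ℕ) : ZMod n) : ZMod n ⊕ ZMod n) ∉
        {x : ZMod n ⊕ ZMod n | ∃ i : ZMod n, x = .inl (4 * i + (j : ZMod n)) ∨
          x = .inr (4 * i + (j : ZMod n) + 2)} := by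
      rw [memR, hfj]
      intro h
      exact absurd (left_eq_add.mp h) (by decide)
    obtain ⟨y, -, huniq⟩ := hC.2 _ hx
    have h1 : (Sum.inl ((j:ℕ) : ZMod n) : ZMod n ⊕ ZMod n) = y := by
      refine huniq _ ⟨(memL _).mpr hfj, ?_⟩
      show ((j:ℕ) : ZMod n) = ((j:ℕ) : ZMod n)
      rfl
    have h2 : (Sum.inr (((j:ℕ) : ZMod n) + (k : ZMod n)) : ZMod n ⊕ ZMod n) = y := by
      refine huniq _ ⟨(memR _).mpr (by rw [map_add, hfj, map_natCast, hk4]), ?_⟩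
      show ((j:ℕ) : ZMod n) ≠ _ ∧ _
      exact ⟨fun h => hk0 (left_eq_add.mp h), Or.inl rfl⟩
    rw [← h2] at h1
    exact absurd h1 (by simp)
end

section
/- Let C be a total perfect code in GP(n,k) such that for every m ∈ ℤ_n, u_m ∈ C if and only if v_m ∈ C. If u_ℓ, v_ℓ ∈ C, then u_{ℓ+3}, v_{ℓ+3} ∈ C; consequently C = {u_{3i+j}, v_{3i+j} : i ∈ ℤ_n} where j ≡ ℓ (mod 3), and moreover k ≢ 0 (mod 3). -/
/-- Case 1 of the proof of Theorem 1.2: if C is a total perfect code in GP(n,k)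
(n ≡ 0 (mod 3)) with u_m ∈ C ↔ v_m ∈ C for all m, and u_l, v_l ∈ C, then
u_{l+3}, v_{l+3} ∈ C; consequently C = {u_{3i+l}, v_{3i+l} : i ∈ ℤ_n} and
k ≢ 0 (mod 3). -/
theorem stmt_12 (n k : ℕ) (hn : 3 ≤ n) (hk0 : (k : ZMod n) ≠ 0) (h3 : n % 3 = 0)
    (C : Set (ZMod n ⊕ ZMod n)) (hC : IsTotalPerfectCode (GP n k) C)
    (hUV : ∀ m : ZMod n, Sum.inl m ∈ C ↔ Sum.inr m ∈ C)
    (l : ZMod n) (hu : Sum.inl l ∈ C) (hv : Sum.inr l ∈ C) :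
    (Sum.inl (l + 3) ∈ C ∧ Sum.inr (l + 3) ∈ C) ∧
    C = {x | ∃ i : ZMod n, x = .inl (3 * i + l) ∨ x = .inr (3 * i + l)} ∧
    k % 3 ≠ 0 := by
  haveI : NeZero n := ⟨by omega⟩
  have h1 : (1 : ZMod n) ≠ 0 := by
    intro h
    have hd : n ∣ 1 := by exact_mod_cast (ZMod.natCast_eq_zero_iff 1 n).mp (by exact_mod_cast h)
    have := Nat.le_of_dvd one_pos hd
    omega
  have h2 : (2 : ZMod n) ≠ 0 := by
    intro h
    have hd : n ∣ 2 := by exact_mod_cast (ZMod.natCast_eq_zero_iff 2 n).mp (by exact_mod_cast h)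
    have := Nat.le_of_dvd two_pos hd
    omega
  -- the basic step
  have step : ∀ m : ZMod n, Sum.inl m ∈ C →
      Sum.inl (m + 1) ∉ C ∧ Sum.inl (m + 2) ∉ C ∧ Sum.inl (m + 3) ∈ C := by
    intro m hm
    have hvm : Sum.inr m ∈ C := (hUV m).1 hm
    have notC1 : Sum.inl (m + 1) ∉ C := by
      intro h
      obtain ⟨y, -, huniq⟩ := hC (Sum.inl m)
      have e1 : Sum.inr m = y := huniq _ ⟨hvm, show m = m from rfl⟩
      have e2 : Sum.inl (m + 1) = y := huniq _
        ⟨h, ⟨fun hh => h1 (by linear_combination -hh), Or.inl rfl⟩⟩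
      simp [← e1] at e2
    have notC2 : Sum.inl (m + 2) ∉ C := by
      intro h
      obtain ⟨y, -, huniq⟩ := hC (Sum.inl (m + 1))
      have e1 : Sum.inl m = y := huniq _
        ⟨hm, ⟨fun hh => h1 (by linear_combination hh), Or.inr rfl⟩⟩
      have e2 : Sum.inl (m + 2) = y := huniq _
        ⟨h, ⟨fun hh => h1 (by linear_combination -hh), Or.inl (by ring)⟩⟩
      rw [← e1] at e2
      exact h2 (by injection e2 with e2; linear_combination e2)
    refine ⟨notC1, notC2, ?_⟩
    obtain ⟨y, ⟨hyC, hyA⟩, -⟩ := hC (Sum.inl (m + 2))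
    obtain (j | j) := y
    · obtain ⟨hne', hj | hj⟩ := hyA
      · have : j = m + 3 := by linear_combination hj
        rwa [this] at hyC
      · have : j = m + 1 := by linear_combination -hj
        rw [this] at hyC
        exact absurd hyC notC1
    · have hj : m + 2 = j := hyA
      rw [← hj] at hyC
      exact absurd ((hUV _).2 hyC) notC2
  -- membership at all multiples of 3
  have mem3 : ∀ j : ℕ, Sum.inl (l + 3 * (j : ZMod n)) ∈ C := by
    intro j
    induction j with
    | zero => simpa using hu
    | succ j ih =>
      have := (step _ ih).2.2
      have e : l + 3 * (j : ZMod n) + 3 = l + 3 * ((j : ℕ) + 1 : ℕ) := by push_cast; ring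
      rwa [e] at this
  have nonmem : ∀ j : ℕ, Sum.inl (l + 3 * (j : ZMod n) + 1) ∉ C ∧
      Sum.inl (l + 3 * (j : ZMod n) + 2) ∉ C := fun j => ⟨(step _ (mem3 j)).1, (step _ (mem3 j)).2.1⟩
  -- characterization of members
  have hmem : ∀ m : ZMod n, Sum.inl m ∈ C → ∃ i : ZMod n, m = 3 * i + l := by
    intro m hm
    have hdm : m = l + (((m - l).val : ℕ) : ZMod n) := by
      rw [(ZMod.natCast_val (m - l)).trans (ZMod.cast_id n (m - l))]; ring
    have hr : (m - l).val % 3 = 0 ∨ (m - l).val % 3 = 1 ∨ (m - l).val % 3 = 2 := by omega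
    rcases hr with hr | hr | hr
    · obtain ⟨q, hq⟩ : ∃ q, (m - l).val = 3 * q := ⟨(m - l).val / 3, by omega⟩
      refine ⟨((q : ℕ) : ZMod n), ?_⟩
      rw [hdm, hq]; push_cast; ring
    · obtain ⟨q, hq⟩ : ∃ q, (m - l).val = 3 * q + 1 := ⟨(m - l).val / 3, by omega⟩
      exfalso
      apply (nonmem q).1
      have e : l + 3 * ((q : ℕ) : ZMod n) + 1 = m := by rw [hdm, hq]; push_cast; ring
      rwa [e]
    · obtain ⟨q, hq⟩ : ∃ q, (m - l).val = 3 * q + 2 := ⟨(m - l).val / 3, by omega⟩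
      exfalso
      apply (nonmem q).2
      have e : l + 3 * ((q : ℕ) : ZMod n) + 2 = m := by rw [hdm, hq]; push_cast; ring
      rwa [e]
  have hmem' : ∀ i : ZMod n, Sum.inl (3 * i + l) ∈ C := by
    intro i
    have := mem3 i.val
    rwa [show l + 3 * ((i.val : ℕ) : ZMod n) = 3 * i + l by
      rw [(ZMod.natCast_val i).trans (ZMod.cast_id n i)]; ring] at this
  have hset : C = {x | ∃ i : ZMod n, x = .inl (3 * i + l) ∨ x = .inr (3 * i + l)} := by
    ext x
    constructor
    · intro hx
      obtain (m | m) := x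
      · obtain ⟨i, hi⟩ := hmem m hx
        exact ⟨i, Or.inl (by rw [hi])⟩
      · obtain ⟨i, hi⟩ := hmem m ((hUV m).2 hx)
        exact ⟨i, Or.inr (by rw [hi])⟩
    · rintro ⟨i, hi | hi⟩ <;> rw [hi]
      · exact hmem' i
      · exact (hUV _).1 (hmem' i)
  have hk3 : k % 3 ≠ 0 := by
    intro hk
    obtain ⟨t, ht⟩ : ∃ t, k = 3 * t := ⟨k / 3, by omega⟩
    have hkC : Sum.inr (l + (k : ZMod n)) ∈ C := by
      have h0 := hmem' ((t : ℕ) : ZMod n)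
      rw [show (3 : ZMod n) * ((t : ℕ) : ZMod n) + l = l + (k : ZMod n) by
        rw [ht]; push_cast; ring] at h0
      exact (hUV _).1 h0
    obtain ⟨y, -, huniq⟩ := hC (Sum.inr l)
    have e1 : Sum.inl l = y := huniq _ ⟨hu, show l = l from rfl⟩
    have e2 : Sum.inr (l + (k : ZMod n)) = y := huniq _
      ⟨hkC, ⟨fun hh => hk0 (by linear_combination -hh), Or.inl rfl⟩⟩
    simp [← e1] at e2
  have h3C := step l hu
  exact ⟨⟨h3C.2.2, (hUV _).1 h3C.2.2⟩, hset, hk3⟩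
end

section
/- Let C be a total perfect code in GP(n,k) with C ∩ U = {u_{6i+j}, u_{6i+j+1} : i ∈ ℤ_n} for some j ∈ {0,...,5}, where n ≡ 0 (mod 6). Then C ∩ V = {v_{6i+j+3}, v_{6i+j+4} : i ∈ ℤ_n}, and k ≡ ±1 (mod 6). -/
lemma gp_ll {n k : ℕ} {i j : ZMod n} :
    (GP n k).Adj (.inl i) (.inl j) ↔ (i ≠ j ∧ (j = i + 1 ∨ i = j + 1)) := Iff.rfl
lemma gp_lr {n k : ℕ} {i j : ZMod n} :
    (GP n k).Adj (.inl i) (.inr j) ↔ i = j := Iff.rfl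
lemma gp_rl {n k : ℕ} {i j : ZMod n} :
    (GP n k).Adj (.inr i) (.inl j) ↔ i = j := Iff.rfl
lemma gp_rr {n k : ℕ} {i j : ZMod n} :
    (GP n k).Adj (.inr i) (.inr j) ↔
      (i ≠ j ∧ (j = i + (k : ZMod n) ∨ i = j + (k : ZMod n))) := Iff.rfl

lemma exists_six_mul {n : ℕ} (hdvd : (6:ℕ) ∣ n) [NeZero n] (x : ZMod n) :
    (∃ i : ZMod n, x = 6 * i) ↔ ZMod.castHom hdvd (ZMod 6) x = 0 := by
  constructor
  · rintro ⟨i, rfl⟩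
    have h1 : (6 : ZMod n) = ((6:ℕ) : ZMod n) := by norm_cast
    rw [h1, map_mul, map_natCast]
    have : ((6:ℕ) : ZMod 6) = 0 := by decide
    rw [this, zero_mul]
  · intro h
    have hval : ((x.val : ℕ) : ZMod 6) = 0 := by
      rw [ZMod.natCast_val]
      rwa [ZMod.castHom_apply] at h
    obtain ⟨t, ht⟩ := (ZMod.natCast_eq_zero_iff x.val 6).mp hval
    refine ⟨(t : ZMod n), ?_⟩
    have h2 : ((x.val : ℕ) : ZMod n) = x := ZMod.natCast_zmod_val x
    rw [← h2, ht]
    push_cast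
    ring

/-- Case 2 of the proof of Theorem 1.2: if C is a total perfect code in GP(n,k)
(n ≡ 0 (mod 6)) with C ∩ U = {u_{6i+j}, u_{6i+j+1} : i ∈ ℤ_n} for some
j ∈ {0,...,5}, then C ∩ V = {v_{6i+j+3}, v_{6i+j+4} : i ∈ ℤ_n} and
k ≡ ±1 (mod 6). -/
theorem stmt_14 (n k : ℕ) (hn : 3 ≤ n) (hk0 : (k : ZMod n) ≠ 0) (h6 : n % 6 = 0)
    (C : Set (ZMod n ⊕ ZMod n)) (hC : IsTotalPerfectCode (GP n k) C)
    (j : ℕ) (hj : j < 6)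
    (hU : ∀ m : ZMod n, Sum.inl m ∈ C ↔
      ∃ i : ZMod n, m = 6 * i + (j : ZMod n) ∨ m = 6 * i + (j : ZMod n) + 1) :
    (∀ m : ZMod n, Sum.inr m ∈ C ↔
      ∃ i : ZMod n, m = 6 * i + (j : ZMod n) + 3 ∨ m = 6 * i + (j : ZMod n) + 4) ∧
    (k % 6 = 1 ∨ k % 6 = 5) := by
  haveI : NeZero n := ⟨by omega⟩
  haveI : Fact (1 < n) := ⟨by omega⟩
  have hdvd : (6:ℕ) ∣ n := Nat.dvd_of_mod_eq_zero h6
  set φ : ZMod n →+* ZMod 6 := ZMod.castHom hdvd (ZMod 6) with hφ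
  set f : ZMod n → ZMod 6 := fun m => φ m - (j : ZMod 6) with hf
  have hfdef : ∀ m : ZMod n, f m = φ m - (j : ZMod 6) := fun _ => rfl
  have key : ∀ (m c : ZMod n), (∃ i : ZMod n, m = 6 * i + c) ↔ φ m = φ c := by
    intro m c
    constructor
    · rintro ⟨i, rfl⟩
      have h1 : (∃ i' : ZMod n, (6 * i + c) - c = 6 * i') := ⟨i, by ring⟩
      have h0 := (exists_six_mul hdvd _).mp h1
      rw [map_sub, sub_eq_zero] at h0
      exact h0
    · intro h
      have h0 : φ (m - c) = 0 := by rw [map_sub, h, sub_self]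
      obtain ⟨i, hi⟩ := (exists_six_mul hdvd _).mpr h0
      exact ⟨i, by linear_combination hi⟩
  have hφj : φ ((j:ℕ) : ZMod n) = ((j:ℕ) : ZMod 6) := map_natCast φ j
  have hU3 : ∀ m : ZMod n, Sum.inl m ∈ C ↔ f m = 0 ∨ f m = 1 := by
    intro m
    rw [hU m, exists_or]
    have e0 : (∃ i : ZMod n, m = 6 * i + (j:ZMod n)) ↔ f m = 0 := by
      rw [key, hφj, hfdef m]
      constructor
      · intro h; linear_combination h
      · intro h; linear_combination h
    have e1 : (∃ i : ZMod n, m = 6 * i + (j:ZMod n) + 1) ↔ f m = 1 := by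
      have hr : (∃ i : ZMod n, m = 6 * i + (j:ZMod n) + 1) ↔
          (∃ i : ZMod n, m = 6 * i + ((j:ZMod n) + 1)) := by
        constructor <;> rintro ⟨i, hi⟩ <;> exact ⟨i, by linear_combination hi⟩
      rw [hr, key, map_add, map_one, hφj, hfdef m]
      constructor
      · intro h; linear_combination h
      · intro h; linear_combination h
    rw [e0, e1]
  have hfadd : ∀ (m : ZMod n) (a : ℕ), f (m + (a:ZMod n)) = f m + (a : ZMod 6) := by
    intro m a
    rw [hfdef, hfdef, map_add, map_natCast]
    ring
  have hfsub : ∀ (m : ZMod n) (a : ℕ), f (m - (a:ZMod n)) = f m - (a : ZMod 6) := by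
    intro m a
    rw [hfdef, hfdef, map_sub, map_natCast]
    ring
  have hcases : ∀ x : ZMod 6, x = 0 ∨ x = 1 ∨ x = 2 ∨ x = 3 ∨ x = 4 ∨ x = 5 := by decide
  have h1ne : (1 : ZMod n) ≠ 0 := one_ne_zero
  have hV : ∀ m : ZMod n, Sum.inr m ∈ C ↔ f m = 3 ∨ f m = 4 := by
    intro m
    obtain ⟨y, ⟨hyC, hyAdj⟩, huniq⟩ := hC (Sum.inl m)
    have hyform : y = Sum.inl (m + 1) ∨ y = Sum.inl (m - 1) ∨ y = Sum.inr m := by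
      rcases y with a | a
      · rw [gp_ll] at hyAdj
        obtain ⟨hne, h1 | h2⟩ := hyAdj
        · left; rw [h1]
        · right; left; rw [eq_sub_of_add_eq h2.symm]
      · rw [gp_lr] at hyAdj
        right; right; rw [hyAdj]
    have hfp1 : f (m + 1) = f m + 1 := by simpa using hfadd m 1
    have hfm1 : f (m - 1) = f m - 1 := by simpa using hfsub m 1
    rcases hcases (f m) with h | h | h | h | h | h
    all_goals (
      first
      | (constructor
         · intro hvm
           have houter : Sum.inl (m + 1) ∈ C ∨ Sum.inl (m - 1) ∈ C := by
             first
             | (left; rw [hU3, hfp1, h]; decide)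
             | (right; rw [hU3, hfm1, h]; decide)
           have hvadj : (GP n k).Adj (Sum.inl m) (Sum.inr m) := gp_lr.mpr rfl
           rcases houter with ho | ho
           · have h1' := huniq (Sum.inl (m+1)) ⟨ho, gp_ll.mpr ⟨by
                 intro hh; exact h1ne (by linear_combination -hh), Or.inl rfl⟩⟩
             have h2' := huniq (Sum.inr m) ⟨hvm, hvadj⟩
             rw [← h1'] at h2'; exact absurd h2' (by simp)
           · have h1' := huniq (Sum.inl (m-1)) ⟨ho, gp_ll.mpr ⟨by
                 intro hh; exact h1ne (by linear_combination hh), Or.inr (by ring)⟩⟩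
             have h2' := huniq (Sum.inr m) ⟨hvm, hvadj⟩
             rw [← h1'] at h2'; exact absurd h2' (by simp)
         · rintro (h' | h') <;> rw [h] at h' <;> exact absurd h' (by decide))
      | (constructor
         · intro _; rw [h]; first | (left; rfl) | (right; rfl)
         · intro _
           rcases hyform with rfl | rfl | rfl
           · rw [hU3, hfp1, h] at hyC
             exact absurd hyC (by decide)
           · rw [hU3, hfm1, h] at hyC
             exact absurd hyC (by decide)
           · exact hyC))
  refine ⟨?_, ?_⟩
  · intro m
    rw [hV m, exists_or]
    have e3 : (∃ i : ZMod n, m = 6 * i + (j:ZMod n) + 3) ↔ f m = 3 := by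
      have hr : (∃ i : ZMod n, m = 6 * i + (j:ZMod n) + 3) ↔
          (∃ i : ZMod n, m = 6 * i + ((j:ZMod n) + 3)) := by
        constructor <;> rintro ⟨i, hi⟩ <;> exact ⟨i, by linear_combination hi⟩
      rw [hr, key, map_add, hφj, map_ofNat, hfdef m]
      constructor
      · intro h; linear_combination h
      · intro h; linear_combination h
    have e4 : (∃ i : ZMod n, m = 6 * i + (j:ZMod n) + 4) ↔ f m = 4 := by
      have hr : (∃ i : ZMod n, m = 6 * i + (j:ZMod n) + 4) ↔
          (∃ i : ZMod n, m = 6 * i + ((j:ZMod n) + 4)) := by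
        constructor <;> rintro ⟨i, hi⟩ <;> exact ⟨i, by linear_combination hi⟩
      rw [hr, key, map_add, hφj, map_ofNat, hfdef m]
      constructor
      · intro h; linear_combination h
      · intro h; linear_combination h
    rw [e3, e4]
  · have hfj : f ((j : ℕ) : ZMod n) = 0 := by
      rw [hfdef, hφj, sub_self]
    obtain ⟨y0, ⟨hy0C, hy0Adj⟩, huniq0⟩ := hC (Sum.inr ((j:ℕ) : ZMod n))
    have hujC : Sum.inl ((j:ℕ) : ZMod n) ∈ C := by
      rw [hU3, hfj]; left; rfl
    have hy0 := huniq0 (Sum.inl ((j:ℕ):ZMod n)) ⟨hujC, gp_rl.mpr rfl⟩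
    have hnot1 : Sum.inr (((j:ℕ):ZMod n) + k) ∉ C := by
      intro hmem
      have h2' := huniq0 (Sum.inr (((j:ℕ):ZMod n) + k)) ⟨hmem,
        gp_rr.mpr ⟨by intro hh; exact hk0 (by linear_combination hh.symm), Or.inl rfl⟩⟩
      rw [← hy0] at h2'
      exact absurd h2' (by simp)
    have hnot2 : Sum.inr (((j:ℕ):ZMod n) - k) ∉ C := by
      intro hmem
      have h2' := huniq0 (Sum.inr (((j:ℕ):ZMod n) - k)) ⟨hmem,
        gp_rr.mpr ⟨by intro hh; exact hk0 (by linear_combination hh), Or.inr (by ring)⟩⟩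
      rw [← hy0] at h2'
      exact absurd h2' (by simp)
    rw [hV, hfadd, hfj, zero_add] at hnot1
    rw [hV, hfsub, hfj, zero_sub] at hnot2
    have hfj2 : f (((j : ℕ) : ZMod n) + 2) = 2 := by
      have h2' := hfadd ((j:ℕ):ZMod n) 2
      rw [hfj] at h2'
      simpa using h2'
    obtain ⟨y2, ⟨hy2C, hy2Adj⟩, _⟩ := hC (Sum.inr (((j:ℕ) : ZMod n) + 2))
    have hy2form : y2 = Sum.inl (((j:ℕ):ZMod n) + 2) ∨
        y2 = Sum.inr ((((j:ℕ):ZMod n) + 2) + k) ∨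
        y2 = Sum.inr ((((j:ℕ):ZMod n) + 2) - k) := by
      rcases y2 with a | a
      · rw [gp_rl] at hy2Adj; left; rw [hy2Adj]
      · rw [gp_rr] at hy2Adj
        obtain ⟨hne, hh | hh⟩ := hy2Adj
        · right; left; rw [hh]
        · right; right; rw [eq_sub_of_add_eq hh.symm]
    have ht2 : (2 + (k:ZMod 6) = 3 ∨ 2 + (k:ZMod 6) = 4) ∨
        (2 - (k:ZMod 6) = 3 ∨ 2 - (k:ZMod 6) = 4) := by
      rcases hy2form with rfl | rfl | rfl
      · rw [hU3, hfj2] at hy2C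
        exact absurd hy2C (by decide)
      · rw [hV, hfadd, hfj2] at hy2C
        exact Or.inl hy2C
      · rw [hV, hfsub, hfj2] at hy2C
        exact Or.inr hy2C
    have ht : (k : ZMod 6) = 1 ∨ (k : ZMod 6) = 5 := by
      rcases hcases ((k : ZMod 6)) with h | h | h | h | h | h <;>
        rw [h] at ht2 hnot1 hnot2 <;> rw [h] <;>
        revert ht2 hnot1 hnot2 <;> decide
    rcases ht with h | h
    · left; rw [← ZMod.val_natCast 6 k, h]; rfl
    · right; rw [← ZMod.val_natCast 6 k, h]; rfl
end
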